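/- For any p, w ∈ ℝ^3 one has κ2 |p|^2 |w|^2 < E(p) E(w) whenever p ≠ 0 and w ≠ 0; consequently, if w ∈ ℝ^3 \ {0} satisfies E(p+w) = E(p) + E(w) for some p ≠ 0, then w · p > 0. -/

import Mathlib

noncomputable def Edisp (κ1 κ2 : ℝ) (p : EuclideanSpace ℝ (Fin 3)) : ℝ :=
  Real.sqrt (κ1 * ‖p‖ ^ 2 + κ2 * ‖p‖ ^ 4)

/-- For `p ≠ 0`, `w ≠ 0` one has `κ2 |p|²|w|² < E(p)E(w)`; consequently if
`E(p+w) = E(p) + E(w)` then `w·p > 0`. -/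
theorem resonance_inner_pos (κ1 κ2 : ℝ) (hκ1 : 0 < κ1) (hκ2 : 0 < κ2)
    (p w : EuclideanSpace ℝ (Fin 3)) (hp : p ≠ 0) (hw : w ≠ 0) :
    κ2 * ‖p‖ ^ 2 * ‖w‖ ^ 2 < Edisp κ1 κ2 p * Edisp κ1 κ2 w ∧
    (Edisp κ1 κ2 (p + w) = Edisp κ1 κ2 p + Edisp κ1 κ2 w →
      (0 : ℝ) < inner ℝ w p) := by
  have hpn : 0 < ‖p‖ := norm_pos_iff.mpr hp
  have hwn : 0 < ‖w‖ := norm_pos_iff.mpr hw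
  have hAp : (0:ℝ) ≤ κ1 * ‖p‖ ^ 2 + κ2 * ‖p‖ ^ 4 := by positivity
  have hAw : (0:ℝ) ≤ κ1 * ‖w‖ ^ 2 + κ2 * ‖w‖ ^ 4 := by positivity
  have h1 : κ2 * ‖p‖ ^ 2 * ‖w‖ ^ 2 < Edisp κ1 κ2 p * Edisp κ1 κ2 w := by
    rw [Edisp, Edisp, ← Real.sqrt_mul hAp]
    have hrw : κ2 * ‖p‖ ^ 2 * ‖w‖ ^ 2
        = Real.sqrt ((κ2 * ‖p‖ ^ 2 * ‖w‖ ^ 2) ^ 2) := by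
      rw [Real.sqrt_sq (by positivity)]
    rw [hrw]
    apply Real.sqrt_lt_sqrt (by positivity)
    nlinarith [mul_pos (mul_pos hκ1 hκ1) (mul_pos (pow_pos hpn 2) (pow_pos hwn 2)),
      mul_pos (mul_pos hκ1 hκ2) (mul_pos (pow_pos hpn 2) (pow_pos hwn 4)),
      mul_pos (mul_pos hκ1 hκ2) (mul_pos (pow_pos hpn 4) (pow_pos hwn 2))]
  refine ⟨h1, fun heq => ?_⟩
  set c : ℝ := inner ℝ w p with hc
  have hcomm : (inner ℝ p w : ℝ) = c := (real_inner_comm p w).symm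
  have hpw : ‖p + w‖ ^ 2 = ‖p‖ ^ 2 + 2 * c + ‖w‖ ^ 2 := by
    rw [norm_add_sq_real, hcomm]
  have hEp : Edisp κ1 κ2 p ^ 2 = κ1 * ‖p‖ ^ 2 + κ2 * ‖p‖ ^ 4 := Real.sq_sqrt hAp
  have hEw : Edisp κ1 κ2 w ^ 2 = κ1 * ‖w‖ ^ 2 + κ2 * ‖w‖ ^ 4 := Real.sq_sqrt hAw
  have hEpw : Edisp κ1 κ2 (p + w) ^ 2 = κ1 * ‖p + w‖ ^ 2 + κ2 * ‖p + w‖ ^ 4 :=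
    Real.sq_sqrt (by positivity)
  have hkey : κ1 * ‖p + w‖ ^ 2 + κ2 * ‖p + w‖ ^ 4
      = Edisp κ1 κ2 p ^ 2 + 2 * (Edisp κ1 κ2 p * Edisp κ1 κ2 w) + Edisp κ1 κ2 w ^ 2 := by
    rw [← hEpw, heq]; ring
  have h4 : ‖p + w‖ ^ 4 = (‖p‖ ^ 2 + 2 * c + ‖w‖ ^ 2) ^ 2 := by
    rw [show (4:ℕ) = 2 * 2 from rfl, pow_mul, hpw]
  rw [hpw, h4, hEp, hEw] at hkey
  have hcs : |c| ≤ ‖w‖ * ‖p‖ := abs_real_inner_le_norm w p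
  have hcs' : -(‖w‖ * ‖p‖) ≤ c := neg_le_of_abs_le hcs
  by_contra hcn
  push_neg at hcn
  have hfac : 0 < κ1 + 2 * κ2 * c + 2 * κ2 * (‖p‖ ^ 2 + ‖w‖ ^ 2) := by
    nlinarith [hcs', sq_nonneg (‖p‖ - ‖w‖), mul_pos hpn hwn]
  have hprod : c * (κ1 + 2 * κ2 * c + 2 * κ2 * (‖p‖ ^ 2 + ‖w‖ ^ 2)) ≤ 0 :=
    mul_nonpos_of_nonpos_of_nonneg hcn hfac.le
  nlinarith [hkey, h1, hprod]
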